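/- arXiv:1912.10584 — 4 statements merged into one kernel-verified Lean document; each statement's English description precedes it below -/
import Mathlib

section
/- Let R be a commutative noetherian ring and let {Φ_λ}_{λ ∈ Λ} be a family of n-coherent subsets of Spec R (for a fixed integer n ≥ 0). Then the intersection ⋂_λ Φ_λ is n-coherent. -/
/-- The set of associated primes, as a subset of the prime spectrum. -/
def assSet (R : Type) [CommRing R] (M : Type) [AddCommGroup M] [Module R M] :
    Set (PrimeSpectrum R) :=
  { p | p.asIdeal ∈ associatedPrimes R M }

/-- A subset of the prime spectrum is specialization-closed if it is stable under passing
to larger primes. -/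
def SpecializationClosed {R : Type} [CommRing R] (Φ : Set (PrimeSpectrum R)) : Prop :=
  ∀ p q : PrimeSpectrum R, p ∈ Φ → p.asIdeal ≤ q.asIdeal → q ∈ Φ

/-- A subset `Φ` of `Spec R` is `n`-coherent if for every exact sequence
`⋯ → I_1 → I_0 → C → 0` of `R`-modules with each `I_i` injective and `Ass I_i ⊆ Φ` for all
`0 ≤ i ≤ n`, one has `Ass C ⊆ Φ`. -/
def NCoherent (R : Type) [CommRing R] (n : ℕ) (Φ : Set (PrimeSpectrum R)) : Prop :=
  ∀ (I : ℕ → Type) (_ : ∀ i, AddCommGroup (I i)) (_ : ∀ i, Module R (I i))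
    (C : Type) (_ : AddCommGroup C) (_ : Module R C)
    (d : ∀ i, I (i + 1) →ₗ[R] I i) (ε : I 0 →ₗ[R] C),
    (∀ i, Module.Injective R (I i)) →
    (∀ i ≤ n, assSet R (I i) ⊆ Φ) →
    Function.Surjective ε →
    Function.Exact (d 0) ε →
    (∀ i, Function.Exact (d (i + 1)) (d i)) →
    assSet R C ⊆ Φ

/-- An arbitrary intersection of `n`-coherent subsets of `Spec R` is `n`-coherent. -/
theorem nCoherent_iInter (R : Type) [CommRing R] [IsNoetherianRing R] (n : ℕ)
    (Λ : Type) (Φ : Λ → Set (PrimeSpectrum R)) (hΦ : ∀ l, NCoherent R n (Φ l)) :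
    NCoherent R n (⋂ l, Φ l) := by
  intro I h1 h2 C h3 h4 d ε hinj hass hsurj hex0 hex p hp
  refine Set.mem_iInter.2 fun l => ?_
  exact hΦ l I h1 h2 C h3 h4 d ε hinj
    (fun i hi q hq => Set.mem_iInter.1 (hass i hi hq) l) hsurj hex0 hex hp
end

section
/- Let R be a commutative noetherian ring and n ≥ 0 an integer. A subset Φ of Spec R is n-coherent if and only if for every prime ideal p of R the set Φ_p = { P ∈ Spec R_p : P ∩ R ∈ Φ } is an n-coherent subset of Spec R_p. -/
lemma colon_bot_singleton_eq_ann {R : Type} [CommRing R] {M : Type} [AddCommGroup M] [Module R M]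
    (x : M) : (⊥ : Submodule R M).colon {x} = (R ∙ x).annihilator := by
  ext r
  rw [Submodule.mem_colon_singleton, Submodule.mem_bot, Submodule.mem_annihilator_span_singleton]

section AssLoc
variable {R : Type} [CommRing R] (W : Submonoid R) (S : Type) [CommRing S] [Algebra R S]
  [IsLocalization W S]
include W S
variable {M : Type} [AddCommGroup M] [Module R M] [Module S M] [IsScalarTower R S M]

lemma ann_comap (x : M) :
    Ideal.comap (algebraMap R S) ((S ∙ x).annihilator) = (R ∙ x).annihilator := by
  ext r
  simp only [Ideal.mem_comap, Submodule.mem_annihilator_span_singleton, algebraMap_smul]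

lemma isAssociatedPrime_comap {q : Ideal S} (hq : IsAssociatedPrime q M) :
    IsAssociatedPrime (q.comap (algebraMap R S)) M := by
  obtain ⟨hq, x, rfl⟩ := hq
  exact ⟨Ideal.IsPrime.comap _, x, by
    rw [Ideal.comap_radical, colon_bot_singleton_eq_ann, colon_bot_singleton_eq_ann,
      ann_comap W S x]⟩

lemma ann_smul_ne_top (x : M) (hP : ((R ∙ x).annihilator).IsPrime) :
    Disjoint (W : Set R) (((R ∙ x).annihilator : Ideal R) : Set R) := by
  rw [Set.disjoint_left]
  intro w hw hwP
  rw [SetLike.mem_coe, Submodule.mem_annihilator_span_singleton] at hwP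
  have hx : x = 0 := by
    have hu : IsUnit (algebraMap R S w) := IsLocalization.map_units S ⟨w, hw⟩
    have : algebraMap R S w • x = 0 := by rwa [algebraMap_smul]
    exact (hu.smul_eq_zero).mp this
  apply hP.ne_top
  rw [hx, Submodule.span_singleton_eq_bot.mpr rfl, Submodule.annihilator_bot]

lemma ann_smul_extend (x : M) (hP : ((R ∙ x).annihilator).IsPrime) :
    (S ∙ x).annihilator = ((R ∙ x).annihilator).map (algebraMap R S) := by
  apply le_antisymm
  · intro s hs
    rw [Submodule.mem_annihilator_span_singleton] at hs
    obtain ⟨a, t, rfl⟩ := IsLocalization.exists_mk'_eq W s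
    have ha : a ∈ (R ∙ x).annihilator := by
      rw [Submodule.mem_annihilator_span_singleton, ← algebraMap_smul S a x,
        ← IsLocalization.mk'_spec S a t, mul_comm, mul_smul, hs, smul_zero]
    rw [IsLocalization.mk'_eq_mul_mk'_one]
    exact Ideal.mul_mem_right _ _ (Ideal.mem_map_of_mem _ ha)
  · rw [Ideal.map_le_iff_le_comap, ann_comap W S x]

lemma isAssociatedPrime_extend (x : M) (hP : ((R ∙ x).annihilator).IsPrime) :
    IsAssociatedPrime ((S ∙ x).annihilator) M := by
  have hpr : ((S ∙ x).annihilator).IsPrime := by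
    rw [ann_smul_extend W S x hP]
    exact IsLocalization.isPrime_of_isPrime_disjoint W S _ hP (ann_smul_ne_top W S x hP)
  exact ⟨hpr, x, by rw [colon_bot_singleton_eq_ann, hpr.radical]⟩

/-- Every associated prime of `M` over `R` is the contraction of an associated prime over `S`. -/
lemma exists_isAssociatedPrime_of_comap [IsNoetherianRing R] {P : Ideal R} (hP : IsAssociatedPrime P M) :
    ∃ q : Ideal S, IsAssociatedPrime q M ∧ q.comap (algebraMap R S) = P := by
  obtain ⟨hP', x, rfl⟩ := isAssociatedPrime_iff.mp hP
  rw [colon_bot_singleton_eq_ann] at hP' ⊢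
  exact ⟨_, isAssociatedPrime_extend W S x hP', ann_comap W S x⟩

end AssLoc


section AssLocMod
variable {R : Type} [CommRing R] (W : Submonoid R)
variable {M M₀ : Type} [AddCommGroup M] [Module R M] [AddCommGroup M₀] [Module R M₀]
variable (f : M →ₗ[R] M₀) [IsLocalizedModule W f]
include W f

lemma smul_smul_eq_zero_iff (t : W) (r : R) (y : M₀) :
    r • ((t : R) • y) = 0 ↔ r • y = 0 := by
  have hu := IsLocalizedModule.map_units f t
  have h1 : ((algebraMap R (Module.End R M₀)) (t : R)) • (r • y) = r • ((t : R) • y) := by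
    rw [Module.End.smul_def, Module.algebraMap_end_apply, smul_comm]
  rw [← h1, hu.smul_eq_zero]

lemma ann_map_eq_of_disjoint (x : M) (hd : Disjoint (W : Set R) (((R ∙ x).annihilator : Ideal R) : Set R))
    (hP : ((R ∙ x).annihilator).IsPrime) :
    (R ∙ f x).annihilator = (R ∙ x).annihilator := by
  ext r
  rw [Submodule.mem_annihilator_span_singleton, Submodule.mem_annihilator_span_singleton]
  constructor
  · intro h
    rw [← map_smul] at h
    obtain ⟨u, hu⟩ := (IsLocalizedModule.eq_zero_iff W f).mp h
    have hur : (u : R) * r ∈ (R ∙ x).annihilator := by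
      rw [Submodule.mem_annihilator_span_singleton, mul_smul]
      exact hu
    rcases hP.mem_or_mem hur with h' | h'
    · exact absurd h' (Set.disjoint_left.mp hd u.2)
    · rwa [Submodule.mem_annihilator_span_singleton] at h'
  · intro h
    rw [← map_smul, h, map_zero]

/-- Over a noetherian ring, every associated prime of a localized module is an associated
prime of the original module. -/
lemma isAssociatedPrime_of_isLocalizedModule [IsNoetherianRing R] {P : Ideal R}
    (hP : IsAssociatedPrime P M₀) : IsAssociatedPrime P M := by
  obtain ⟨hprime, x, rfl⟩ := isAssociatedPrime_iff.mp hP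
  rw [colon_bot_singleton_eq_ann] at hprime ⊢
  obtain ⟨⟨m, t⟩, hmt⟩ := IsLocalizedModule.surj W f x
  have hann : (R ∙ f m).annihilator = (R ∙ x).annihilator := by
    ext r
    rw [Submodule.mem_annihilator_span_singleton, Submodule.mem_annihilator_span_singleton,
      ← hmt, Submonoid.smul_def, smul_smul_eq_zero_iff W f]
  obtain ⟨s, hs⟩ := IsNoetherian.noetherian ((R ∙ x).annihilator : Ideal R)
  have hgen : ∀ a : {a // a ∈ s}, ∃ u : W, (u : R) • (a : R) • m = 0 := by
    intro ⟨a, ha⟩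
    have haP : a ∈ (R ∙ f m).annihilator := by
      rw [hann, ← hs]; exact Ideal.subset_span ha
    rw [Submodule.mem_annihilator_span_singleton, ← map_smul] at haP
    obtain ⟨u, hu⟩ := (IsLocalizedModule.eq_zero_iff W f).mp haP
    exact ⟨u, hu⟩
  choose u hu using hgen
  set U : W := ∏ a ∈ s.attach, u a with hU
  classical
  have hsann : ∀ a ∈ s, a • ((U : R) • m) = 0 := by
    intro a ha
    have : (a : R) * (U : R) = (((s.attach.erase ⟨a, ha⟩).prod u : W) : R) * ((u ⟨a, ha⟩ : R) * a) := by
      rw [hU, ← Finset.mul_prod_erase s.attach u (Finset.mem_attach s ⟨a, ha⟩)]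
      push_cast
      ring
    rw [smul_smul, this, mul_smul, mul_smul, hu ⟨a, ha⟩, smul_zero]
  refine isAssociatedPrime_iff.mpr ⟨hprime, (U : R) • m, ?_⟩
  rw [colon_bot_singleton_eq_ann]
  apply le_antisymm
  · rw [← hs, Submodule.span_le]
    intro a ha
    rw [SetLike.mem_coe, Submodule.mem_annihilator_span_singleton]
    exact hsann a ha
  · intro r hr
    rw [Submodule.mem_annihilator_span_singleton] at hr
    have : r • f ((U : R) • m) = 0 := by rw [← map_smul, hr, map_zero]
    rw [map_smul] at this
    rw [← hann, Submodule.mem_annihilator_span_singleton]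
    exact (smul_smul_eq_zero_iff W f U r (f m)).mp this
end AssLocMod


section Inj
variable {R : Type} [CommRing R] (W : Submonoid R) (S : Type) [CommRing S] [Algebra R S]
  [IsLocalization W S]

section TowerUnits
variable {M : Type} [AddCommGroup M] [Module R M] [Module S M] [IsScalarTower R S M]
include W S

lemma isUnit_algebraMap_end (w : W) :
    IsUnit ((algebraMap R (Module.End R M)) (w : R)) := by
  rw [Module.End.isUnit_iff]
  have hu : IsUnit (algebraMap R S (w : R)) := IsLocalization.map_units S w
  have key : ∀ x : M, (algebraMap R (Module.End R M)) (w : R) x = hu.unit • x := by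
    intro x
    rw [Module.algebraMap_end_apply, Units.smul_def, IsUnit.unit_spec, algebraMap_smul]
  constructor
  · intro a b h
    rw [key, key] at h
    have h2 : hu.unit⁻¹ • hu.unit • a = hu.unit⁻¹ • hu.unit • b :=
      congrArg (fun y => hu.unit⁻¹ • y) h
    rwa [inv_smul_smul, inv_smul_smul] at h2
  · intro y
    refine ⟨hu.unit⁻¹ • y, ?_⟩
    rw [key, smul_inv_smul]

/-- An injective module over a localization of `R` is injective over `R`. -/
lemma Module.Injective.of_isLocalization (hinj : Module.Injective S M) :
    Module.Injective R M := by
  apply Module.Baer.injective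
  intro I g
  let J : Submodule S S := I.localized' S W (Algebra.linearMap R S)
  let ι : I →ₗ[R] J := I.toLocalized' S W (Algebra.linearMap R S)
  let g' : J →ₗ[R] M := IsLocalizedModule.lift W ι g
    (fun w => isUnit_algebraMap_end W S w)
  have hg' : ∀ a : I, g' (ι a) = g a := fun a =>
    IsLocalizedModule.lift_apply W ι g (fun w => isUnit_algebraMap_end W S w) a
  obtain ⟨h, hh⟩ := hinj.out J.subtype J.injective_subtype
    (g'.extendScalarsOfIsLocalization W S)
  refine ⟨(h.restrictScalars R).comp (Algebra.linearMap R S), ?_⟩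
  intro x hx
  have h1 : (Algebra.linearMap R S) x = J.subtype (ι ⟨x, hx⟩) := rfl
  simp only [LinearMap.coe_comp, LinearMap.coe_restrictScalars, Function.comp_apply, h1, hh]
  rw [LinearMap.extendScalarsOfIsLocalization_apply']
  exact hg' ⟨x, hx⟩

end TowerUnits

end Inj

section Matlis
variable {R : Type} [CommRing R] (W : Submonoid R) (S : Type) [CommRing S] [Algebra R S]
  [IsLocalization W S]
variable {M M' : Type} [AddCommGroup M] [Module R M] [AddCommGroup M'] [Module R M']
  [Module S M'] [IsScalarTower R S M']
variable (fM : M →ₗ[R] M') [IsLocalizedModule W fM]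

include W fM in
/-- Matlis: the localization of an injective module over a noetherian ring is injective
over the localized ring. -/
lemma Module.Injective.localized [IsNoetherianRing R] (hinj : Module.Injective R M) :
    Module.Injective S M' := by
  apply Module.Baer.injective
  intro J g
  set I : Ideal R := J.comap (algebraMap R S) with hIdef
  haveI : Module.Finite R I := Module.Finite.iff_fg.mpr (IsNoetherian.noetherian I)
  haveI : Module.FinitePresentation R I := Module.finitePresentation_of_finite R I
  set J₀ : Submodule S S := I.localized' S W (Algebra.linearMap R S) with hJ₀def
  set ι : I →ₗ[R] J₀ := I.toLocalized' S W (Algebra.linearMap R S) with hιdef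
  have hJ₀ : J₀ = J := by
    apply le_antisymm
    · intro x hx
      obtain ⟨m, hm, t, ht⟩ := (Submodule.mem_localized' S W _ I x).mp hx
      have ht' : algebraMap R S (t : R) * x = algebraMap R S m := by
        rw [← ht, ← Algebra.smul_def, ← Submonoid.smul_def,
          IsLocalizedModule.mk'_cancel']
        rfl
      have hu : IsUnit (algebraMap R S (t : R)) := IsLocalization.map_units S t
      have hxx : x = hu.unit⁻¹ • algebraMap R S m := by
        have huu : (hu.unit : S) * x = algebraMap R S m := by
          rw [IsUnit.unit_spec]; exact ht'
        rw [← huu, Units.smul_def, smul_eq_mul, Units.inv_mul_cancel_left]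
      rw [hxx, Units.smul_def, smul_eq_mul]
      exact Ideal.mul_mem_left _ _ (Ideal.mem_comap.mp hm)
    · intro x hx
      obtain ⟨a, t, rfl⟩ := IsLocalization.exists_mk'_eq W x
      have ha : a ∈ I := by
        rw [hIdef, Ideal.mem_comap, ← IsLocalization.mk'_spec S a t]
        exact Ideal.mul_mem_right _ _ hx
      refine (Submodule.mem_localized' S W _ I _).mpr ⟨a, ha, t, ?_⟩
      rw [IsLocalizedModule.mk'_eq_iff, Submonoid.smul_def, Algebra.smul_def,
        IsLocalization.mk'_spec']
      rfl
  let e : J₀ ≃ₗ[S] J := LinearEquiv.ofEq _ _ hJ₀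
  let g₀ : J₀ →ₗ[S] M' := g ∘ₗ e.toLinearMap
  obtain ⟨⟨F₀, t⟩, hF⟩ :=
    IsLocalizedModule.surj W (IsLocalizedModule.mapExtendScalars W ι fM S) g₀
  obtain ⟨F, hF'⟩ := hinj.out I.subtype I.injective_subtype F₀
  set G : S →ₗ[S] M' := IsLocalizedModule.mapExtendScalars W (Algebra.linearMap R S) fM S F
    with hGdef
  have key : ((G.restrictScalars R).comp (J₀.subtype.restrictScalars R)).comp ι
      = ((IsLocalizedModule.mapExtendScalars W ι fM S F₀).restrictScalars R).comp ι := by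
    ext a
    simp only [LinearMap.coe_comp, LinearMap.coe_restrictScalars, Function.comp_apply]
    have h1 : (J₀.subtype) (ι a) = Algebra.linearMap R S (a : R) := rfl
    have h2 : G (Algebra.linearMap R S (a : R)) = fM (F (a : R)) := by
      rw [hGdef, IsLocalizedModule.mapExtendScalars_apply_apply,
        IsLocalizedModule.map_apply]
    have h3 : (IsLocalizedModule.mapExtendScalars W ι fM S F₀) (ι a) = fM (F₀ a) := by
      rw [IsLocalizedModule.mapExtendScalars_apply_apply, IsLocalizedModule.map_apply]
    rw [h1, h2, h3]
    exact congrArg fM (hF' a)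
  have key'' := IsLocalizedModule.ext W ι (IsLocalizedModule.map_units fM) key
  have key' : ∀ x : J₀, G (x : S) =
      (IsLocalizedModule.mapExtendScalars W ι fM S F₀) x := by
    intro x
    exact LinearMap.congr_fun key'' x
  have hu : IsUnit (algebraMap R S (t : R)) := IsLocalization.map_units S t
  refine ⟨hu.unit⁻¹ • G, ?_⟩
  intro x hx
  have hx₀ : x ∈ J₀ := hJ₀.symm ▸ hx
  have h4 : G x = algebraMap R S (t : R) • g ⟨x, hx⟩ := by
    have h5 := key' ⟨x, hx₀⟩
    have h6 := LinearMap.congr_fun hF.symm (⟨x, hx₀⟩ : J₀)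
    rw [Submonoid.smul_def, LinearMap.smul_apply] at h6
    have h7 : g₀ ⟨x, hx₀⟩ = g ⟨x, hx⟩ := rfl
    rw [h5, h6, h7, algebraMap_smul]
  show (hu.unit⁻¹ • G) x = g ⟨x, hx⟩
  have h8 : (algebraMap R S (t : R)) • g ⟨x, hx⟩ = hu.unit • g ⟨x, hx⟩ := by
    rw [Units.smul_def, IsUnit.unit_spec]
  rw [LinearMap.smul_apply, h4, h8, inv_smul_smul]
end Matlis



/-- A subset `Φ ⊆ Spec R` is `n`-coherent if and only if for every prime `p` the subset
`Φ_p = { P ∈ Spec R_p : P ∩ R ∈ Φ }` of `Spec R_p` is `n`-coherent. -/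
theorem nCoherent_iff_forall_localization (R : Type) [CommRing R] [IsNoetherianRing R]
    (n : ℕ) (Φ : Set (PrimeSpectrum R)) :
    NCoherent R n Φ ↔
      ∀ p : PrimeSpectrum R,
        NCoherent (Localization.AtPrime p.asIdeal) n
          { P : PrimeSpectrum (Localization.AtPrime p.asIdeal) |
              PrimeSpectrum.comap (algebraMap R (Localization.AtPrime p.asIdeal)) P ∈ Φ } := by
  constructor
  · -- forward direction
    intro h p
    set W := p.asIdeal.primeCompl with hW
    set S := Localization.AtPrime p.asIdeal with hS
    intro I instAG instMod C instAGC instModC d ε hInj hAss hsurj hex0 hex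
    letI instR : ∀ i, Module R (I i) := fun i => Module.compHom (I i) (algebraMap R S)
    haveI instT : ∀ i, IsScalarTower R S (I i) := fun i =>
      IsScalarTower.of_algebraMap_smul (fun r x => rfl)
    letI instRC : Module R C := Module.compHom C (algebraMap R S)
    haveI instTC : IsScalarTower R S C :=
      IsScalarTower.of_algebraMap_smul (fun r x => rfl)
    have hRC : assSet R C ⊆ Φ := by
      refine h I instAG instR C instAGC instRC
        (fun i => (d i).restrictScalars R) (ε.restrictScalars R)
        (fun i => Module.Injective.of_isLocalization W S (hInj i)) ?_ hsurj hex0 hex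
      intro i hi q hq
      obtain ⟨qS, hqS, hcomap⟩ := exists_isAssociatedPrime_of_comap W S hq
      have := hAss i hi (show (⟨qS, hqS.isPrime⟩ : PrimeSpectrum S) ∈ assSet S (I i) from hqS)
      have heq : PrimeSpectrum.comap (algebraMap R S) ⟨qS, hqS.isPrime⟩ = q := by
        apply PrimeSpectrum.ext
        exact hcomap
      rw [Set.mem_setOf_eq] at this
      rwa [heq] at this
    intro P hP
    have h1 : IsAssociatedPrime (P.asIdeal.comap (algebraMap R S)) C :=
      isAssociatedPrime_comap W S hP
    exact hRC h1
  · -- reverse direction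
    intro hloc I instAG instMod C instAGC instModC d ε hInj hAss hsurj hex0 hex q hq
    set W := q.asIdeal.primeCompl with hW
    set S := Localization.AtPrime q.asIdeal with hS
    have key := hloc q (fun i => LocalizedModule W (I i)) (fun i => inferInstance)
      (fun i => inferInstance) (LocalizedModule W C) inferInstance inferInstance
      (fun i => LocalizedModule.map W (d i)) (LocalizedModule.map W ε)
      (fun i => Module.Injective.localized W S (LocalizedModule.mkLinearMap W (I i)) (hInj i))
      ?_ (LocalizedModule.map_surjective W ε hsurj)
      (LocalizedModule.map_exact W (d 0) ε hex0)
      (fun i => LocalizedModule.map_exact W (d (i + 1)) (d i) (hex i))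
    · obtain ⟨hprime, x, hx⟩ := isAssociatedPrime_iff.mp hq
      rw [colon_bot_singleton_eq_ann] at hx
      have hprimeann : ((R ∙ x).annihilator).IsPrime := hx ▸ hprime
      have hdisj : Disjoint (W : Set R) (((R ∙ x).annihilator : Ideal R) : Set R) := by
        rw [← hx]
        rw [Set.disjoint_left]
        intro a ha ha'
        exact ha ha'
      set fC := LocalizedModule.mkLinearMap W C with hfC
      have hx' : (R ∙ fC x).annihilator = (R ∙ x).annihilator :=
        ann_map_eq_of_disjoint W fC x hdisj hprimeann
      have hprime2 : ((R ∙ fC x).annihilator).IsPrime := by rw [hx']; exact hprimeann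
      have h2 : IsAssociatedPrime ((S ∙ fC x).annihilator) (LocalizedModule W C) :=
        isAssociatedPrime_extend W S (fC x) hprime2
      have h3 := key (show (⟨_, h2.isPrime⟩ : PrimeSpectrum S) ∈
        assSet S (LocalizedModule W C) from h2)
      have heq : PrimeSpectrum.comap (algebraMap R S) ⟨_, h2.isPrime⟩ = q := by
        apply PrimeSpectrum.ext
        show ((S ∙ fC x).annihilator).comap (algebraMap R S) = q.asIdeal
        rw [ann_comap W S, hx', hx]
      rw [Set.mem_setOf_eq] at h3
      rwa [heq] at h3
    · intro i hi P hP
      have h1 : IsAssociatedPrime (P.asIdeal.comap (algebraMap R S)) (LocalizedModule W (I i)) :=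
        isAssociatedPrime_comap W S hP
      have h2 : IsAssociatedPrime (P.asIdeal.comap (algebraMap R S)) (I i) :=
        isAssociatedPrime_of_isLocalizedModule W (LocalizedModule.mkLinearMap W (I i)) h1
      exact hAss i hi (show (PrimeSpectrum.comap (algebraMap R S) P) ∈ assSet R (I i) from h2)
end

section
/- Let R be a commutative noetherian ring, Φ a subset of Spec R, and 0 → L → M → N → 0 an exact sequence of R-modules. Fix n ≥ 0 and let C^n_Φ denote the class of modules X admitting an exact sequence 0 → X → I^0 → ⋯ → I^n with each I^i injective and Ass(I^i) ⊆ Φ. Then: (i) if L, N ∈ C^n_Φ then M ∈ C^n_Φ; (ii) if M ∈ C^n_Φ and N ∈ C^{n-1}_Φ then L ∈ C^n_Φ. -/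
/-- Membership in the class `C^n_Φ`: an `R`-module `X` belongs to `C^n_Φ` if there is an
exact sequence `0 → X → I^0 → I^1 → ⋯ → I^n` with every `I^i` (for `0 ≤ i ≤ n`) injective
and with associated primes contained in `Φ`. -/
def CMem (R : Type) [CommRing R] (Φ : Set (PrimeSpectrum R)) (n : ℕ)
    (M : Type) [AddCommGroup M] [Module R M] : Prop :=
  ∃ (I : ℕ → Type) (_ : ∀ i, AddCommGroup (I i)) (_ : ∀ i, Module R (I i))
    (d : ∀ i, I i →ₗ[R] I (i + 1)) (ε : M →ₗ[R] I 0),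
    Function.Injective ε ∧
    (0 < n → Function.Exact ε (d 0)) ∧
    (∀ i, i + 2 ≤ n → Function.Exact (d i) (d (i + 1))) ∧
    (∀ i ≤ n, Module.Injective R (I i)) ∧
    (∀ i ≤ n, assSet R (I i) ⊆ Φ)

/-- Prepend a module to a family of modules. -/
def consFam (E : Type) (I : ℕ → Type) : ℕ → Type
  | 0 => E
  | k + 1 => I k

instance consFamAddCommGroup (E : Type) (I : ℕ → Type) [AddCommGroup E]
    [∀ i, AddCommGroup (I i)] : ∀ i, AddCommGroup (consFam E I i)
  | 0 => inferInstanceAs (AddCommGroup E)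
  | k + 1 => inferInstanceAs (AddCommGroup (I k))

instance consFamModule (R : Type) [CommRing R] (E : Type) (I : ℕ → Type) [AddCommGroup E]
    [Module R E] [∀ i, AddCommGroup (I i)] [∀ i, Module R (I i)] :
    ∀ i, Module R (consFam E I i)
  | 0 => inferInstanceAs (Module R E)
  | k + 1 => inferInstanceAs (Module R (I k))

/-- Prepend a map to a family of maps. -/
def consMap {R : Type} [CommRing R] {E : Type} {I : ℕ → Type} [AddCommGroup E] [Module R E]
    [∀ i, AddCommGroup (I i)] [∀ i, Module R (I i)]
    (d0 : E →ₗ[R] I 0) (d : ∀ k, I k →ₗ[R] I (k + 1)) :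
    ∀ i, consFam E I i →ₗ[R] consFam E I (i + 1)
  | 0 => d0
  | k + 1 => d k

section Aux

variable {R : Type} [CommRing R]

lemma injective_prod {A B : Type} [AddCommGroup A] [Module R A] [AddCommGroup B] [Module R B]
    (hA : Module.Injective R A) (hB : Module.Injective R B) :
    Module.Injective R (A × B) where
  out X Y _ _ _ _ f hf g := by
    obtain ⟨hA', hAeq⟩ := hA.out f hf ((LinearMap.fst R A B).comp g)
    obtain ⟨hB', hBeq⟩ := hB.out f hf ((LinearMap.snd R A B).comp g)
    refine ⟨hA'.prod hB', fun x => ?_⟩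
    have h1 := hAeq x
    have h2 := hBeq x
    simp only [LinearMap.comp_apply, LinearMap.fst_apply, LinearMap.snd_apply] at h1 h2
    simp [LinearMap.prod_apply, h1, h2]

lemma isAssociatedPrime_or [IsNoetherianRing R] {A B C : Type} [AddCommGroup A] [Module R A]
    [AddCommGroup B] [Module R B] [AddCommGroup C] [Module R C]
    {p : Ideal R} (f : A →ₗ[R] B) (g : B →ₗ[R] C)
    (hf : Function.Injective f) (hfg : Function.Exact f g)
    (h : IsAssociatedPrime p B) : IsAssociatedPrime p A ∨ IsAssociatedPrime p C := by
  obtain ⟨hp, x, hx⟩ := isAssociatedPrime_iff.mp h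
  have hmem : ∀ r : R, r ∈ p ↔ r • x = 0 := by
    intro r
    rw [hx, Submodule.mem_colon_singleton, Submodule.mem_bot]
  by_cases hcase : ∃ r, r ∉ p ∧ r • x ∈ Set.range f
  · obtain ⟨r, hr, l, hl⟩ := hcase
    left
    rw [isAssociatedPrime_iff]
    refine ⟨hp, l, ?_⟩
    ext s
    rw [Submodule.mem_colon_singleton, Submodule.mem_bot]
    constructor
    · intro hs
      apply hf
      rw [map_smul, hl, map_zero, smul_smul]
      exact (hmem (s * r)).mp (Ideal.mul_mem_right r p hs)
    · intro hs
      have : (s * r) • x = 0 := by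
        rw [← smul_smul, ← hl, ← map_smul, hs, map_zero]
      rcases hp.mem_or_mem ((hmem (s * r)).mpr this) with h' | h'
      · exact h'
      · exact absurd h' hr
  · push_neg at hcase
    right
    rw [isAssociatedPrime_iff]
    refine ⟨hp, g x, ?_⟩
    ext s
    rw [Submodule.mem_colon_singleton, Submodule.mem_bot]
    constructor
    · intro hs
      rw [← map_smul, (hmem s).mp hs, map_zero]
    · intro hs
      have hmem' : s • x ∈ Set.range f := (hfg (s • x)).mp (by rw [map_smul, hs])
      by_contra hsp
      exact hcase s hsp hmem'

lemma assSet_prod_subset [IsNoetherianRing R] {A B : Type} [AddCommGroup A] [Module R A]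
    [AddCommGroup B] [Module R B] :
    assSet R (A × B) ⊆ assSet R A ∪ assSet R B := by
  intro p hp
  rcases isAssociatedPrime_or (LinearMap.inl R A B) (LinearMap.snd R A B)
    LinearMap.inl_injective (Function.Exact.inl_snd) hp with h | h
  · exact Or.inl h
  · exact Or.inr h

variable {Φ : Set (PrimeSpectrum R)}

lemma cMem_zero_iff {X : Type} [AddCommGroup X] [Module R X] :
    CMem R Φ 0 X ↔ ∃ (E : Type) (_ : AddCommGroup E) (_ : Module R E) (ε : X →ₗ[R] E),
      Function.Injective ε ∧ Module.Injective R E ∧ assSet R E ⊆ Φ := by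
  constructor
  · rintro ⟨I, hAdd, hMod, d, ε, hinj, -, -, hI, hass⟩
    exact ⟨I 0, hAdd 0, hMod 0, ε, hinj, hI 0 le_rfl, hass 0 le_rfl⟩
  · rintro ⟨E, iE, mE, ε, hinj, hE, hass⟩
    refine ⟨fun _ => E, fun _ => iE, fun _ => mE, fun _ => 0, ε, hinj, ?_, ?_, ?_, ?_⟩
    · intro h
      exact absurd h (lt_irrefl 0)
    · intro i hi
      exact absurd hi (by omega)
    · intro i _
      exact hE
    · intro i _
      exact hass

lemma cMem_succ_iff {n : ℕ} {X : Type} [AddCommGroup X] [Module R X] :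
    CMem R Φ (n + 1) X ↔ ∃ (E : Type) (_ : AddCommGroup E) (_ : Module R E) (ε : X →ₗ[R] E),
      Function.Injective ε ∧ Module.Injective R E ∧ assSet R E ⊆ Φ ∧
      CMem R Φ n (E ⧸ LinearMap.range ε) := by
  constructor
  · rintro ⟨I, hAdd, hMod, d, ε, hinj, hex0, hex, hI, hass⟩
    letI := hAdd; letI := hMod
    have hker : LinearMap.ker (d 0) = LinearMap.range ε :=
      LinearMap.exact_iff.mp (hex0 (Nat.succ_pos n))
    refine ⟨I 0, inferInstance, inferInstance, ε, hinj, hI 0 (by omega), hass 0 (by omega),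
      fun i => I (i + 1), fun i => inferInstance, fun i => inferInstance,
      fun i => d (i + 1),
      Submodule.liftQ _ (d 0) (le_of_eq hker.symm), ?_, ?_, ?_, ?_, ?_⟩
    · rw [← LinearMap.ker_eq_bot]
      exact Submodule.ker_liftQ_eq_bot _ _ _ (le_of_eq hker)
    · intro hn
      rw [LinearMap.exact_iff, Submodule.range_liftQ]
      exact LinearMap.exact_iff.mp (hex 0 (by omega))
    · exact fun i hi => hex (i + 1) (by omega)
    · exact fun i hi => hI (i + 1) (by omega)
    · exact fun i hi => hass (i + 1) (by omega)
  · rintro ⟨E, _, _, ε, hinj, hE, hass, I, hAdd, hMod, d, ε', hinj', hex0, hex, hI, hass'⟩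
    letI := hAdd; letI := hMod
    refine ⟨consFam E I, fun i => inferInstance, fun i => inferInstance,
      consMap (ε'.comp (LinearMap.range ε).mkQ) d,
      ε, hinj, ?_, ?_, ?_, ?_⟩
    · intro _
      show Function.Exact ε (ε'.comp (LinearMap.range ε).mkQ)
      rw [LinearMap.exact_iff, LinearMap.ker_comp,
        (LinearMap.ker_eq_bot (f := ε')).mpr hinj', Submodule.comap_bot, Submodule.ker_mkQ]
    · intro i hi
      match i with
      | 0 =>
        show Function.Exact (ε'.comp (LinearMap.range ε).mkQ) (d 0)
        rw [LinearMap.exact_iff, LinearMap.range_comp, Submodule.range_mkQ, Submodule.map_top]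
        exact LinearMap.exact_iff.mp (hex0 (by omega))
      | (k + 1) =>
        exact hex k (by omega)
    · intro i hi
      match i with
      | 0 => exact hE
      | (k + 1) => exact hI k (by omega)
    · intro i hi
      match i with
      | 0 => exact hass
      | (k + 1) => exact hass' k (by omega)

lemma cMem_of_equiv {n : ℕ} {X Y : Type} [AddCommGroup X] [Module R X]
    [AddCommGroup Y] [Module R Y] (e : X ≃ₗ[R] Y) (h : CMem R Φ n X) : CMem R Φ n Y := by
  obtain ⟨I, hAdd, hMod, d, ε, hinj, hex0, hex, hI, hass⟩ := h
  letI := hAdd; letI := hMod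
  refine ⟨I, hAdd, hMod, d, ε.comp (e.symm : Y →ₗ[R] X),
    hinj.comp e.symm.injective, ?_, hex, hI, hass⟩
  intro hn
  rw [LinearMap.exact_iff, LinearMap.range_comp, LinearEquiv.range, Submodule.map_top]
  exact LinearMap.exact_iff.mp (hex0 hn)

lemma cMem_mid [IsNoetherianRing R] : ∀ (n : ℕ) (L M N : Type) [AddCommGroup L] [Module R L]
    [AddCommGroup M] [Module R M] [AddCommGroup N] [Module R N]
    (f : L →ₗ[R] M) (g : M →ₗ[R] N),
    Function.Injective f → Function.Surjective g → Function.Exact f g →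
    CMem R Φ n L → CMem R Φ n N → CMem R Φ n M := by
  intro n
  induction n with
  | zero =>
    intro L M N _ _ _ _ _ _ f g hf hg hfg hL hN
    rw [cMem_zero_iff] at hL hN ⊢
    obtain ⟨EL, _, _, εL, hinjL, hEL, hassL⟩ := hL
    obtain ⟨EN, _, _, εN, hinjN, hEN, hassN⟩ := hN
    obtain ⟨h, hh⟩ := hEL.out f hf εL
    refine ⟨EL × EN, inferInstance, inferInstance, h.prod (εN.comp g), ?_, injective_prod hEL hEN,
      assSet_prod_subset.trans (Set.union_subset hassL hassN)⟩
    rw [← LinearMap.ker_eq_bot, eq_bot_iff]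
    intro m hm
    simp only [LinearMap.mem_ker, LinearMap.prod_apply, LinearMap.comp_apply, Function.prod,
      Prod.mk_eq_zero] at hm
    obtain ⟨hm1, hm2⟩ := hm
    have hgm : g m = 0 := hinjN (by rw [hm2, map_zero])
    obtain ⟨l, rfl⟩ := (hfg m).mp hgm
    rw [hh l] at hm1
    have hl0 : l = 0 := hinjL (by rw [hm1, map_zero])
    rw [Submodule.mem_bot, hl0, map_zero]
  | succ k ih =>
    intro L M N _ _ _ _ _ _ f g hf hg hfg hL hN
    rw [cMem_succ_iff] at hL hN ⊢
    obtain ⟨EL, _, _, εL, hinjL, hEL, hassL, hQL⟩ := hL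
    obtain ⟨EN, _, _, εN, hinjN, hEN, hassN, hQN⟩ := hN
    obtain ⟨h, hh⟩ := hEL.out f hf εL
    set μ : M →ₗ[R] EL × EN := h.prod (εN.comp g) with hμ
    have hμf : ∀ l, μ (f l) = (εL l, 0) := by
      intro l
      have hgf : g (f l) = 0 := (hfg (f l)).mpr ⟨l, rfl⟩
      simp [hμ, LinearMap.prod_apply, hh l, hgf]
    have hμinj : Function.Injective μ := by
      rw [← LinearMap.ker_eq_bot, eq_bot_iff]
      intro m hm
      simp only [hμ, LinearMap.mem_ker, LinearMap.prod_apply, LinearMap.comp_apply, Function.prod,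
        Prod.mk_eq_zero] at hm
      obtain ⟨hm1, hm2⟩ := hm
      have hgm : g m = 0 := hinjN (by rw [hm2, map_zero])
      obtain ⟨l, rfl⟩ := (hfg m).mp hgm
      rw [hh l] at hm1
      have hl0 : l = 0 := hinjL (by rw [hm1, map_zero])
      rw [Submodule.mem_bot, hl0, map_zero]
    refine ⟨EL × EN, inferInstance, inferInstance, μ, hμinj, injective_prod hEL hEN,
      assSet_prod_subset.trans (Set.union_subset hassL hassN), ?_⟩
    -- build the short exact sequence of cokernels
    have hα_le : LinearMap.range εL ≤
        LinearMap.ker ((LinearMap.range μ).mkQ.comp (LinearMap.inl R EL EN)) := by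
      rintro _ ⟨l, rfl⟩
      simp only [LinearMap.mem_ker, LinearMap.comp_apply, LinearMap.inl_apply,
        Submodule.mkQ_apply, Submodule.Quotient.mk_eq_zero]
      exact ⟨f l, hμf l⟩
    set α : (EL ⧸ LinearMap.range εL) →ₗ[R] ((EL × EN) ⧸ LinearMap.range μ) :=
      Submodule.liftQ _ ((LinearMap.range μ).mkQ.comp (LinearMap.inl R EL EN)) hα_le with hα
    have hβ_le : LinearMap.range μ ≤
        LinearMap.ker ((LinearMap.range εN).mkQ.comp (LinearMap.snd R EL EN)) := by
      rintro _ ⟨m, rfl⟩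
      simp only [LinearMap.mem_ker, LinearMap.comp_apply, LinearMap.snd_apply,
        Submodule.mkQ_apply, Submodule.Quotient.mk_eq_zero, hμ, LinearMap.prod_apply, Function.prod]
      exact ⟨g m, rfl⟩
    set β : ((EL × EN) ⧸ LinearMap.range μ) →ₗ[R] (EN ⧸ LinearMap.range εN) :=
      Submodule.liftQ _ ((LinearMap.range εN).mkQ.comp (LinearMap.snd R EL EN)) hβ_le with hβ
    have hαinj : Function.Injective α := by
      rw [← LinearMap.ker_eq_bot, eq_bot_iff]
      intro q hq
      obtain ⟨x, rfl⟩ := Submodule.Quotient.mk_surjective _ q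
      simp only [hα, LinearMap.mem_ker, Submodule.liftQ_apply, LinearMap.comp_apply,
        LinearMap.inl_apply, Submodule.mkQ_apply, Submodule.Quotient.mk_eq_zero] at hq
      obtain ⟨m, hm⟩ := hq
      have hm2 : εN (g m) = 0 := congrArg Prod.snd hm
      have hgm : g m = 0 := hinjN (by rw [hm2, map_zero])
      obtain ⟨l, rfl⟩ := (hfg m).mp hgm
      have hm1 : εL l = x := (hh l).symm.trans (congrArg Prod.fst hm)
      rw [Submodule.mem_bot, Submodule.Quotient.mk_eq_zero]
      exact ⟨l, hm1⟩
    have hβsurj : Function.Surjective β := by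
      intro q
      obtain ⟨y, rfl⟩ := Submodule.Quotient.mk_surjective _ q
      exact ⟨Submodule.Quotient.mk ((0 : EL), y), rfl⟩
    have hexαβ : Function.Exact α β := by
      rw [LinearMap.exact_iff]
      apply le_antisymm
      · intro q hq
        obtain ⟨⟨x, y⟩, rfl⟩ := Submodule.Quotient.mk_surjective _ q
        simp only [hβ, LinearMap.mem_ker, Submodule.liftQ_apply, LinearMap.comp_apply,
          LinearMap.snd_apply, Submodule.mkQ_apply, Submodule.Quotient.mk_eq_zero] at hq
        obtain ⟨n0, hn0⟩ := hq
        obtain ⟨m, rfl⟩ := hg n0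
        refine ⟨Submodule.Quotient.mk (x - h m), ?_⟩
        show Submodule.Quotient.mk (x - h m, (0 : EN)) = Submodule.Quotient.mk (x, y)
        rw [Submodule.Quotient.eq]
        refine ⟨-m, ?_⟩
        have : μ (-m) = (-(h m), -(εN (g m))) := by
          simp [hμ, LinearMap.prod_apply]
        rw [this, hn0]
        ext <;> simp
      · rintro _ ⟨q, rfl⟩
        obtain ⟨x, rfl⟩ := Submodule.Quotient.mk_surjective _ q
        simp only [hα, hβ, LinearMap.mem_ker, Submodule.liftQ_apply, LinearMap.comp_apply,
          LinearMap.inl_apply, LinearMap.snd_apply, Submodule.mkQ_apply,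
          Submodule.Quotient.mk_eq_zero]
        exact Submodule.zero_mem _
    exact ih _ _ _ α β hαinj hβsurj hexαβ hQL hQN

end Aux

/-- For a short exact sequence `0 → L → M → N → 0`:
(i) if `L, N ∈ C^n_Φ` then `M ∈ C^n_Φ`;
(ii) if `M ∈ C^n_Φ` and `N ∈ C^{n-1}_Φ` (no condition when `n = 0`, as `C^{-1}_Φ` is all
of `Mod R`) then `L ∈ C^n_Φ`. -/
theorem cMem_of_shortExact (R : Type) [CommRing R] [IsNoetherianRing R]
    (Φ : Set (PrimeSpectrum R)) (n : ℕ)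
    (L M N : Type) [AddCommGroup L] [Module R L] [AddCommGroup M] [Module R M]
    [AddCommGroup N] [Module R N]
    (f : L →ₗ[R] M) (g : M →ₗ[R] N)
    (hf : Function.Injective f) (hg : Function.Surjective g)
    (hfg : Function.Exact f g) :
    (CMem R Φ n L → CMem R Φ n N → CMem R Φ n M) ∧
    (CMem R Φ n M → (0 < n → CMem R Φ (n - 1) N) → CMem R Φ n L) := by
  constructor
  · intro hL hN
    exact cMem_mid n L M N f g hf hg hfg hL hN
  · intro hM hN
    cases n with
    | zero =>
      rw [cMem_zero_iff] at hM ⊢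
      obtain ⟨E, iE, mE, εM, hinjM, hE, hass⟩ := hM
      exact ⟨E, iE, mE, εM.comp f, hinjM.comp hf, hE, hass⟩
    | succ k =>
      have hN' : CMem R Φ k N := hN (Nat.succ_pos k)
      rw [cMem_succ_iff] at hM ⊢
      obtain ⟨E, iE, mE, εM, hinjM, hE, hass, hQM⟩ := hM
      letI := iE; letI := mE
      set ε : L →ₗ[R] E := εM.comp f with hε
      refine ⟨E, iE, mE, ε, hinjM.comp hf, hE, hass, ?_⟩
      -- short exact sequence 0 → N → E ⧸ range ε → E ⧸ range εM → 0
      have hle1 : LinearMap.ker g ≤ LinearMap.ker ((LinearMap.range ε).mkQ.comp εM) := by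
        intro m hm
        rw [LinearMap.mem_ker] at hm
        obtain ⟨l, rfl⟩ := (hfg m).mp hm
        simp only [LinearMap.mem_ker, LinearMap.comp_apply, Submodule.mkQ_apply,
          Submodule.Quotient.mk_eq_zero]
        exact ⟨l, rfl⟩
      have hN'' : CMem R Φ k (M ⧸ LinearMap.ker g) :=
        cMem_of_equiv (g.quotKerEquivOfSurjective hg).symm hN'
      set γ : (M ⧸ LinearMap.ker g) →ₗ[R] (E ⧸ LinearMap.range ε) :=
        Submodule.liftQ (LinearMap.ker g) ((LinearMap.range ε).mkQ.comp εM) hle1 with hγ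
      have key : ∀ m : M, γ (Submodule.Quotient.mk m) = Submodule.Quotient.mk (εM m) := by
        intro m
        simp only [hγ, Submodule.liftQ_apply, LinearMap.comp_apply, Submodule.mkQ_apply]
      have hγinj : Function.Injective γ := by
        rw [← LinearMap.ker_eq_bot, eq_bot_iff]
        intro q hq
        rw [LinearMap.mem_ker] at hq
        obtain ⟨m, rfl⟩ := Submodule.Quotient.mk_surjective _ q
        rw [key m, Submodule.Quotient.mk_eq_zero] at hq
        obtain ⟨l, hl⟩ := hq
        have hflm : f l = m := hinjM hl
        rw [Submodule.mem_bot, Submodule.Quotient.mk_eq_zero, LinearMap.mem_ker, ← hflm]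
        exact (hfg (f l)).mpr ⟨l, rfl⟩
      have hle2 : LinearMap.range ε ≤ LinearMap.ker (LinearMap.range εM).mkQ := by
        rintro _ ⟨l, rfl⟩
        rw [Submodule.ker_mkQ]
        exact ⟨f l, rfl⟩
      set π : (E ⧸ LinearMap.range ε) →ₗ[R] (E ⧸ LinearMap.range εM) :=
        Submodule.liftQ _ (LinearMap.range εM).mkQ hle2 with hπ
      have hπsurj : Function.Surjective π := by
        intro q
        obtain ⟨x, rfl⟩ := Submodule.Quotient.mk_surjective _ q
        exact ⟨Submodule.Quotient.mk x, rfl⟩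
      have hexγπ : Function.Exact γ π := by
        rw [LinearMap.exact_iff]
        apply le_antisymm
        · intro q hq
          obtain ⟨x, rfl⟩ := Submodule.Quotient.mk_surjective _ q
          simp only [hπ, LinearMap.mem_ker, Submodule.liftQ_apply, Submodule.mkQ_apply,
            Submodule.Quotient.mk_eq_zero] at hq
          obtain ⟨m, rfl⟩ := hq
          exact ⟨Submodule.Quotient.mk m, key m⟩
        · rintro _ ⟨q0, rfl⟩
          obtain ⟨m, rfl⟩ := Submodule.Quotient.mk_surjective _ q0
          rw [LinearMap.mem_ker, key m]
          simp only [hπ, Submodule.liftQ_apply, Submodule.mkQ_apply,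
            Submodule.Quotient.mk_eq_zero]
          exact ⟨m, rfl⟩
      exact cMem_mid k _ _ _ γ π hγinj hπsurj hexγπ hN'' hQM
end

section
/- Let R be a commutative noetherian ring and Φ ⊆ Spec R a subset that is both specialization-closed and generalization-closed. Then Φ is clopen in Spec R with the Zariski topology; in particular, the set of minimal elements of Φ is finite and Φ is a finite union of closed sets V(p) over minimal primes p of R lying in Φ. -/
/-- A subset of the prime spectrum is generalization-closed if it is stable under passing
to smaller primes. -/
def GeneralizationClosed {R : Type} [CommRing R] (Φ : Set (PrimeSpectrum R)) : Prop :=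
  ∀ p q : PrimeSpectrum R, q ∈ Φ → p.asIdeal ≤ q.asIdeal → p ∈ Φ

namespace ClopenAux

variable {R : Type} [CommRing R]

lemma mem_min (Φ : Set (PrimeSpectrum R)) (h2 : GeneralizationClosed Φ)
    (p : PrimeSpectrum R) (hp : p ∈ { p ∈ Φ | ∀ q ∈ Φ, q.asIdeal ≤ p.asIdeal → q = p }) :
    p.asIdeal ∈ minimalPrimes R := by
  obtain ⟨hpΦ, hpmin⟩ := hp
  obtain ⟨q, hq, hqle⟩ := Ideal.exists_minimalPrimes_le (I := (⊥ : Ideal R))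
    (J := p.asIdeal) bot_le
  haveI : q.IsPrime := hq.1.1
  have hQ : (⟨q, hq.1.1⟩ : PrimeSpectrum R) ∈ Φ := h2 _ p hpΦ hqle
  have := hpmin _ hQ hqle
  rw [minimalPrimes]
  have : q = p.asIdeal := congrArg PrimeSpectrum.asIdeal this
  rwa [← this]

lemma union_eq (Φ : Set (PrimeSpectrum R))
    (h1 : SpecializationClosed Φ) (h2 : GeneralizationClosed Φ) :
    Φ = ⋃ p ∈ { p ∈ Φ | ∀ q ∈ Φ, q.asIdeal ≤ p.asIdeal → q = p },
          PrimeSpectrum.zeroLocus (p.asIdeal : Set R) := by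
  ext r
  simp only [Set.mem_iUnion, PrimeSpectrum.mem_zeroLocus, SetLike.coe_subset_coe,
    Set.mem_setOf_eq, exists_prop]
  constructor
  · intro hr
    obtain ⟨q, hq, hqle⟩ := Ideal.exists_minimalPrimes_le (I := (⊥ : Ideal R))
      (J := r.asIdeal) bot_le
    haveI : q.IsPrime := hq.1.1
    set Q : PrimeSpectrum R := ⟨q, hq.1.1⟩ with hQdef
    have hQΦ : Q ∈ Φ := h2 _ r hr hqle
    refine ⟨Q, ⟨⟨hQΦ, ?_⟩, hqle⟩⟩
    intro q' hq' hle
    have : Q.asIdeal ≤ q'.asIdeal := hq.2 ⟨q'.2, bot_le⟩ hle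
    exact PrimeSpectrum.ext (le_antisymm hle this)
  · rintro ⟨p, ⟨⟨hpΦ, -⟩, hle⟩⟩
    exact h1 p r hpΦ hle

lemma min_finite [IsNoetherianRing R] (Φ : Set (PrimeSpectrum R))
    (h2 : GeneralizationClosed Φ) :
    { p ∈ Φ | ∀ q ∈ Φ, q.asIdeal ≤ p.asIdeal → q = p }.Finite := by
  have hfin : (minimalPrimes R).Finite := minimalPrimes.finite_of_isNoetherianRing R
  have hsub : { p ∈ Φ | ∀ q ∈ Φ, q.asIdeal ≤ p.asIdeal → q = p } ⊆
      PrimeSpectrum.asIdeal ⁻¹' (minimalPrimes R) := fun p hp => mem_min Φ h2 p hp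
  refine Set.Finite.subset (Set.Finite.preimage ?_ hfin) hsub
  exact Set.injOn_of_injective (fun a b h => PrimeSpectrum.ext h)

lemma isClosed [IsNoetherianRing R] (Φ : Set (PrimeSpectrum R))
    (h1 : SpecializationClosed Φ) (h2 : GeneralizationClosed Φ) :
    IsClosed Φ := by
  rw [union_eq Φ h1 h2]
  exact Set.Finite.isClosed_biUnion (min_finite Φ h2)
    (fun p _ => PrimeSpectrum.isClosed_zeroLocus _)

end ClopenAux

/-- A subset of `Spec R` (`R` noetherian) that is both specialization-closed and
generalization-closed is clopen; in particular its set of minimal elements is finite,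
consists of minimal primes of `R`, and `Φ` is the (finite) union of the `V(p)` over the
minimal elements `p` of `Φ`. -/
theorem clopen_of_specialization_and_generalization_closed (R : Type) [CommRing R]
    [IsNoetherianRing R] (Φ : Set (PrimeSpectrum R))
    (h1 : SpecializationClosed Φ) (h2 : GeneralizationClosed Φ) :
    IsClopen Φ ∧
      { p ∈ Φ | ∀ q ∈ Φ, q.asIdeal ≤ p.asIdeal → q = p }.Finite ∧
      (∀ p ∈ { p ∈ Φ | ∀ q ∈ Φ, q.asIdeal ≤ p.asIdeal → q = p },
        p.asIdeal ∈ minimalPrimes R) ∧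
      Φ = ⋃ p ∈ { p ∈ Φ | ∀ q ∈ Φ, q.asIdeal ≤ p.asIdeal → q = p },
            PrimeSpectrum.zeroLocus (p.asIdeal : Set R) := by
  have hcompl1 : SpecializationClosed Φᶜ := fun p q hp hle hq => hp (h2 p q hq hle)
  have hcompl2 : GeneralizationClosed Φᶜ := fun p q hq hle hp => hq (h1 p q hp hle)
  refine ⟨⟨?_, ?_⟩, ClopenAux.min_finite Φ h2, ClopenAux.mem_min Φ h2,
    ClopenAux.union_eq Φ h1 h2⟩
  · exact ClopenAux.isClosed Φ h1 h2
  · rw [← isClosed_compl_iff]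
    exact ClopenAux.isClosed Φᶜ hcompl1 hcompl2
end
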